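/- Under the dyadic fixed-effects setup, for all α, α′ ∈ D such that r(α) ∈ D and r(α′) ∈ D, one has ‖r(r(α)) − r(r(α′))‖₁ ≤ (1 − (2(n−2)/(n−1))·δ²)·‖α − α′‖₁, where δ = c₁c₂. (Two-step ℓ₁-contraction of the degree-matching iteration map; core of Theorem 3.1.) -/

import Mathlib

open Finset
set_option linter.unusedSectionVars false
set_option maxHeartbeats 1000000

noncomputable def Jmat {n : ℕ} (B : Fin n → Fin n → ℝ) (i m : Fin n) : ℝ :=
  if m = i then 1 - (1 / ((n:ℝ) - 1)) * ∑ j ∈ univ.erase i, B i j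
  else -((1 / ((n:ℝ) - 1)) * B m i)

section alg
variable {n : ℕ} (hn : 2 ≤ n) (δ : ℝ) (hδ : 0 < δ) (hδ2 : δ ≤ 1/2)
variable (B : Fin n → Fin n → ℝ) (hB : ∀ i j : Fin n, i ≠ j → B i j ∈ Set.Icc δ (1-δ))

lemma hn1 {n : ℕ} (hn : 2 ≤ n) : (0:ℝ) < (n:ℝ) - 1 := by
  have : (2:ℝ) ≤ (n:ℝ) := by exact_mod_cast hn
  linarith

include hn hδ hδ2 hB

lemma card_er (i : Fin n) : ((univ.erase i).card : ℝ) = (n:ℝ) - 1 := by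
  rw [Finset.card_erase_of_mem (mem_univ i), Finset.card_univ, Fintype.card_fin]
  have : 1 ≤ n := by omega
  push_cast [this]
  ring

lemma Jdiag_mem (i : Fin n) : Jmat B i i ∈ Set.Icc δ (1-δ) := by
  have h1 := hn1 hn
  have hcard := card_er hn δ hδ hδ2 B hB i
  have hub : ∑ j ∈ univ.erase i, B i j ≤ ((n:ℝ) - 1) * (1-δ) := by
    calc ∑ j ∈ univ.erase i, B i j ≤ ∑ _j ∈ univ.erase i, (1-δ) := by
          apply Finset.sum_le_sum
          intro j hj
          exact (hB i j (Ne.symm (Finset.ne_of_mem_erase hj))).2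
      _ = ((n:ℝ) - 1) * (1-δ) := by rw [Finset.sum_const, nsmul_eq_mul, hcard]
  have hlb : ((n:ℝ) - 1) * δ ≤ ∑ j ∈ univ.erase i, B i j := by
    calc ((n:ℝ) - 1) * δ = ∑ _j ∈ univ.erase i, δ := by rw [Finset.sum_const, nsmul_eq_mul, hcard]
      _ ≤ ∑ j ∈ univ.erase i, B i j := by
          apply Finset.sum_le_sum
          intro j hj
          exact (hB i j (Ne.symm (Finset.ne_of_mem_erase hj))).1
  simp only [Jmat, eq_self_iff_true, if_true]
  constructor
  · have : (1 / ((n:ℝ) - 1)) * ∑ j ∈ univ.erase i, B i j ≤ 1 - δ := by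
      rw [div_mul_eq_mul_div, one_mul, div_le_iff₀ h1]
      calc ∑ j ∈ univ.erase i, B i j ≤ ((n:ℝ) - 1) * (1-δ) := hub
        _ = (1-δ) * ((n:ℝ)-1) := by ring
    linarith
  · have : δ ≤ (1 / ((n:ℝ) - 1)) * ∑ j ∈ univ.erase i, B i j := by
      rw [div_mul_eq_mul_div, one_mul, le_div_iff₀ h1]
      calc δ * ((n:ℝ)-1) = ((n:ℝ)-1) * δ := by ring
        _ ≤ _ := hlb
    linarith

lemma Joff (i m : Fin n) (h : i ≠ m) : Jmat B i m = -((1 / ((n:ℝ) - 1)) * B m i) := by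
  simp only [Jmat, if_neg (Ne.symm h)]

lemma Joff_abs (i m : Fin n) (h : i ≠ m) :
    |Jmat B i m| = (1 / ((n:ℝ) - 1)) * B m i := by
  rw [Joff hn δ hδ hδ2 B hB i m h, abs_neg, abs_of_nonneg]
  have h1 := hn1 hn
  have h2 : 0 < B m i := lt_of_lt_of_le hδ (hB m i (Ne.symm h)).1
  positivity

lemma Jcolsum (m : Fin n) : ∑ i, |Jmat B i m| = 1 := by
  rw [← Finset.sum_erase_add _ _ (mem_univ m)]
  have hdiag : |Jmat B m m| = Jmat B m m :=
    abs_of_nonneg (le_trans hδ.le (Jdiag_mem hn δ hδ hδ2 B hB m).1)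
  have hoff : ∑ i ∈ univ.erase m, |Jmat B i m|
      = (1 / ((n:ℝ) - 1)) * ∑ i ∈ univ.erase m, B m i := by
    rw [Finset.mul_sum]
    apply Finset.sum_congr rfl
    intro i hi
    exact Joff_abs hn δ hδ hδ2 B hB i m (Finset.ne_of_mem_erase hi)
  rw [hdiag, hoff]
  simp only [Jmat, eq_self_iff_true, if_true]
  ring

end alg

section alg2
variable {n : ℕ} (hn : 2 ≤ n) (δ : ℝ) (hδ : 0 < δ) (hδ2 : δ ≤ 1/2)
variable (B C : Fin n → Fin n → ℝ)
  (hB : ∀ i j : Fin n, i ≠ j → B i j ∈ Set.Icc δ (1-δ))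
  (hC : ∀ i j : Fin n, i ≠ j → C i j ∈ Set.Icc δ (1-δ))

lemma sum_split (g : Fin n → ℝ) (i j : Fin n) (hij : i ≠ j) :
    ∑ k, g k = g i + g j + ∑ k ∈ (univ.erase i).erase j, g k := by
  rw [← Finset.sum_erase_add univ g (mem_univ i),
      ← Finset.sum_erase_add (univ.erase i) g (Finset.mem_erase.mpr ⟨Ne.symm hij, mem_univ j⟩)]
  ring

include hn in
lemma card_er2 (i j : Fin n) (hij : i ≠ j) :
    ((((univ.erase i).erase j).card : ℕ) : ℝ) = (n:ℝ) - 2 := by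
  rw [Finset.card_erase_of_mem (Finset.mem_erase.mpr ⟨Ne.symm hij, mem_univ j⟩),
      Finset.card_erase_of_mem (mem_univ i), Finset.card_univ, Fintype.card_fin]
  have h2 : n - 1 - 1 = n - 2 := by omega
  rw [h2, Nat.cast_sub hn]
  norm_num

include hn hδ hδ2 hB hC

lemma Jprod_entry (i j : Fin n) (hij : i ≠ j) :
    |∑ k, Jmat B i k * Jmat C k j| ≤
      (∑ k, |Jmat B i k| * |Jmat C k j|) - 2*(((n:ℝ)-2)*δ^2/((n:ℝ)-1)^2) := by
  have h1 := hn1 hn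
  have he : (0:ℝ) < 1/((n:ℝ)-1) := by positivity
  have hkS : ∀ k ∈ (univ.erase i).erase j, k ≠ i ∧ k ≠ j := by
    intro k hk
    exact ⟨Finset.ne_of_mem_erase (Finset.mem_of_mem_erase hk), Finset.ne_of_mem_erase hk⟩
  have hsplit : ∑ k, Jmat B i k * Jmat C k j
      = Jmat B i i * Jmat C i j + Jmat B i j * Jmat C j j
        + ∑ k ∈ (univ.erase i).erase j, Jmat B i k * Jmat C k j :=
    sum_split _ i j hij
  have hsplitabs : ∑ k, |Jmat B i k| * |Jmat C k j|
      = |Jmat B i i| * |Jmat C i j| + |Jmat B i j| * |Jmat C j j|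
        + ∑ k ∈ (univ.erase i).erase j, |Jmat B i k| * |Jmat C k j| :=
    sum_split _ i j hij
  have hBd := Jdiag_mem hn δ hδ hδ2 B hB i
  have hCd := Jdiag_mem hn δ hδ hδ2 C hC j
  have hBij : Jmat B i j = -(1/((n:ℝ)-1) * B j i) := Joff hn δ hδ hδ2 B hB i j hij
  have hCij : Jmat C i j = -(1/((n:ℝ)-1) * C j i) := Joff hn δ hδ hδ2 C hC i j hij
  have hBija : |Jmat B i j| = 1/((n:ℝ)-1) * B j i := Joff_abs hn δ hδ hδ2 B hB i j hij
  have hCija : |Jmat C i j| = 1/((n:ℝ)-1) * C j i := Joff_abs hn δ hδ hδ2 C hC i j hij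
  have hBda : |Jmat B i i| = Jmat B i i := abs_of_nonneg (le_trans hδ.le hBd.1)
  have hCda : |Jmat C j j| = Jmat C j j := abs_of_nonneg (le_trans hδ.le hCd.1)
  have hPeq : ∑ k ∈ (univ.erase i).erase j, Jmat B i k * Jmat C k j
      = ∑ k ∈ (univ.erase i).erase j, (1/((n:ℝ)-1) * B k i) * (1/((n:ℝ)-1) * C j k) := by
    apply Finset.sum_congr rfl
    intro k hk
    obtain ⟨hki, hkj⟩ := hkS k hk
    rw [Joff hn δ hδ hδ2 B hB i k (Ne.symm hki), Joff hn δ hδ hδ2 C hC k j hkj]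
    ring
  have hPeqabs : ∑ k ∈ (univ.erase i).erase j, |Jmat B i k| * |Jmat C k j|
      = ∑ k ∈ (univ.erase i).erase j, (1/((n:ℝ)-1) * B k i) * (1/((n:ℝ)-1) * C j k) := by
    apply Finset.sum_congr rfl
    intro k hk
    obtain ⟨hki, hkj⟩ := hkS k hk
    rw [Joff_abs hn δ hδ hδ2 B hB i k (Ne.symm hki), Joff_abs hn δ hδ hδ2 C hC k j hkj]
  have hcard := card_er2 hn i j hij
  have hPlb : ((n:ℝ)-2)*δ^2/((n:ℝ)-1)^2
      ≤ ∑ k ∈ (univ.erase i).erase j, (1/((n:ℝ)-1) * B k i) * (1/((n:ℝ)-1) * C j k) := by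
    have hstep : ∑ k ∈ (univ.erase i).erase j, (δ*(1/((n:ℝ)-1)))*(δ*(1/((n:ℝ)-1)))
        ≤ ∑ k ∈ (univ.erase i).erase j, (1/((n:ℝ)-1) * B k i) * (1/((n:ℝ)-1) * C j k) := by
      apply Finset.sum_le_sum
      intro k hk
      obtain ⟨hki, hkj⟩ := hkS k hk
      have hb := (hB k i hki).1
      have hc := (hC j k (Ne.symm hkj)).1
      have hb' : δ * (1/((n:ℝ)-1)) ≤ 1/((n:ℝ)-1) * B k i := by
        rw [mul_comm δ _]; exact mul_le_mul_of_nonneg_left hb he.le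
      have hc' : δ * (1/((n:ℝ)-1)) ≤ 1/((n:ℝ)-1) * C j k := by
        rw [mul_comm δ _]; exact mul_le_mul_of_nonneg_left hc he.le
      have hpos : (0:ℝ) ≤ δ * (1/((n:ℝ)-1)) := by positivity
      exact mul_le_mul hb' hc' hpos (le_trans hpos hb')
    rw [Finset.sum_const, nsmul_eq_mul, hcard] at hstep
    have hrw : ((n:ℝ)-2) * ((δ*(1/((n:ℝ)-1)))*(δ*(1/((n:ℝ)-1))))
        = ((n:ℝ)-2)*δ^2/((n:ℝ)-1)^2 := by
      have hne : ((n:ℝ)-1) ≠ 0 := ne_of_gt h1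
      field_simp
    linarith [hrw ▸ hstep]
  have hNlb : ((n:ℝ)-2)*δ^2/((n:ℝ)-1)^2
      ≤ Jmat B i i * (1/((n:ℝ)-1) * C j i) + (1/((n:ℝ)-1) * B j i) * Jmat C j j := by
    have hb := (hB j i (Ne.symm hij)).1
    have hc := (hC j i (Ne.symm hij)).1
    have h2n : ((n:ℝ)-2)*δ^2/((n:ℝ)-1)^2 ≤ 2 * δ^2 * (1/((n:ℝ)-1)) := by
      rw [div_le_iff₀ (by positivity : (0:ℝ) < ((n:ℝ)-1)^2)]
      have hexp : 2 * δ ^ 2 * (1 / ((n:ℝ) - 1)) * ((n:ℝ) - 1) ^ 2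
          = 2*δ^2*((n:ℝ)-1) * ((1/((n:ℝ)-1)) * ((n:ℝ)-1)) := by ring
      rw [hexp, one_div_mul_cancel (ne_of_gt h1), mul_one]
      nlinarith
    have ht1 : δ * (δ * (1/((n:ℝ)-1))) ≤ Jmat B i i * (1/((n:ℝ)-1) * C j i) := by
      have hh : δ * (1/((n:ℝ)-1)) ≤ 1/((n:ℝ)-1) * C j i := by
        rw [mul_comm δ _]
        exact mul_le_mul_of_nonneg_left hc he.le
      calc δ * (δ * (1/((n:ℝ)-1))) ≤ δ * (1/((n:ℝ)-1) * C j i) :=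
            mul_le_mul_of_nonneg_left hh hδ.le
        _ ≤ Jmat B i i * (1/((n:ℝ)-1) * C j i) :=
            mul_le_mul_of_nonneg_right hBd.1 (le_trans (by positivity) hh)
    have ht2 : (δ * (1/((n:ℝ)-1))) * δ ≤ (1/((n:ℝ)-1) * B j i) * Jmat C j j := by
      have hh : δ * (1/((n:ℝ)-1)) ≤ 1/((n:ℝ)-1) * B j i := by
        rw [mul_comm δ _]
        exact mul_le_mul_of_nonneg_left hb he.le
      calc (δ * (1/((n:ℝ)-1))) * δ = δ * (δ * (1/((n:ℝ)-1))) := by ring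
        _ ≤ δ * (1/((n:ℝ)-1) * B j i) := mul_le_mul_of_nonneg_left hh hδ.le
        _ = (1/((n:ℝ)-1) * B j i) * δ := by ring
        _ ≤ (1/((n:ℝ)-1) * B j i) * Jmat C j j :=
            mul_le_mul_of_nonneg_left hCd.1 (le_trans (by positivity) hh)
    linarith
  rw [hsplit, hsplitabs, hPeq, hPeqabs, hBija, hCija, hBda, hCda, hBij, hCij, abs_le]
  constructor <;> linarith [hPlb, hNlb]

lemma Jprod_colsum (j : Fin n) :
    ∑ i, |∑ k, Jmat B i k * Jmat C k j| ≤ 1 - 2*((n:ℝ)-2)*δ^2/((n:ℝ)-1) := by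
  have h1 := hn1 hn
  have hdouble : ∑ i, ∑ k, |Jmat B i k| * |Jmat C k j| = 1 := by
    rw [Finset.sum_comm]
    have : ∀ k : Fin n, ∑ i, |Jmat B i k| * |Jmat C k j| = |Jmat C k j| := by
      intro k
      rw [← Finset.sum_mul, Jcolsum hn δ hδ hδ2 B hB k, one_mul]
    simp only [this]
    exact Jcolsum hn δ hδ hδ2 C hC j
  rw [← Finset.sum_erase_add _ _ (mem_univ j)]
  have hdiagbd : |∑ k, Jmat B j k * Jmat C k j| ≤ ∑ k, |Jmat B j k| * |Jmat C k j| := by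
    calc |∑ k, Jmat B j k * Jmat C k j| ≤ ∑ k, |Jmat B j k * Jmat C k j| :=
          Finset.abs_sum_le_sum_abs _ _
      _ = ∑ k, |Jmat B j k| * |Jmat C k j| := by simp [abs_mul]
  have hoffbd : ∑ i ∈ univ.erase j, |∑ k, Jmat B i k * Jmat C k j|
      ≤ (∑ i ∈ univ.erase j, ∑ k, |Jmat B i k| * |Jmat C k j|)
        - ((n:ℝ)-1) * (2*(((n:ℝ)-2)*δ^2/((n:ℝ)-1)^2)) := by
    have hptw : ∀ i ∈ univ.erase j, |∑ k, Jmat B i k * Jmat C k j| ≤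
        (∑ k, |Jmat B i k| * |Jmat C k j|) - 2*(((n:ℝ)-2)*δ^2/((n:ℝ)-1)^2) :=
      fun i hi => Jprod_entry hn δ hδ hδ2 B C hB hC i j (Finset.ne_of_mem_erase hi)
    have h := Finset.sum_le_sum hptw
    rw [Finset.sum_sub_distrib, Finset.sum_const, nsmul_eq_mul,
        card_er hn δ hδ hδ2 B hB j] at h
    exact h
  have htot : (∑ i ∈ univ.erase j, ∑ k, |Jmat B i k| * |Jmat C k j|)
      + ∑ k, |Jmat B j k| * |Jmat C k j| = 1 := by
    rw [Finset.sum_erase_add _ _ (mem_univ j)]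
    exact hdouble
  have harith : ((n:ℝ)-1) * (2*(((n:ℝ)-2)*δ^2/((n:ℝ)-1)^2)) = 2*((n:ℝ)-2)*δ^2/((n:ℝ)-1) := by
    field_simp
  linarith

end alg2

lemma Jmat_diag' {n : ℕ} (B : Fin n → Fin n → ℝ) (i : Fin n) :
    Jmat B i i = 1 - (1 / ((n:ℝ) - 1)) * ∑ j ∈ univ.erase i, B i j := if_pos rfl

lemma Jmat_off' {n : ℕ} (B : Fin n → Fin n → ℝ) (i m : Fin n) (h : m ≠ i) :
    Jmat B i m = -((1 / ((n:ℝ) - 1)) * B m i) := if_neg h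

section alg3
variable {n : ℕ} (hn : 2 ≤ n) (δ : ℝ) (hδ : 0 < δ) (hδ2 : δ ≤ 1/2)
variable (B C : Fin n → Fin n → ℝ)
  (hB : ∀ i j : Fin n, i ≠ j → B i j ∈ Set.Icc δ (1-δ))
  (hC : ∀ i j : Fin n, i ≠ j → C i j ∈ Set.Icc δ (1-δ))
include hn hδ hδ2 hB

lemma Jabs_le_one (i m : Fin n) : |Jmat B i m| ≤ 1 := by
  have h1 := hn1 hn
  by_cases h : m = i
  · subst h
    have := Jdiag_mem hn δ hδ hδ2 B hB m
    rw [abs_of_nonneg (le_trans hδ.le this.1)]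
    linarith [this.2]
  · rw [Joff_abs hn δ hδ hδ2 B hB i m (fun hh => h hh.symm)]
    have hb := hB m i h
    have he1 : 1/((n:ℝ)-1) ≤ 1 := by
      rw [div_le_one h1]
      have : (2:ℝ) ≤ (n:ℝ) := by exact_mod_cast hn
      linarith
    have h0 : (0:ℝ) < 1/((n:ℝ)-1) := by positivity
    nlinarith [hb.1, hb.2]

lemma Jbound_vec (v : Fin n → ℝ) (i : Fin n) :
    |∑ j, Jmat B i j * v j| ≤ ∑ j, |v j| := by
  calc |∑ j, Jmat B i j * v j| ≤ ∑ j, |Jmat B i j * v j| := Finset.abs_sum_le_sum_abs _ _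
    _ ≤ ∑ j, |v j| := by
        apply Finset.sum_le_sum
        intro j _
        rw [abs_mul]
        calc |Jmat B i j| * |v j| ≤ 1 * |v j| :=
              mul_le_mul_of_nonneg_right (Jabs_le_one hn δ hδ hδ2 B hB i j) (abs_nonneg _)
          _ = |v j| := one_mul _

include hC in
lemma Jprod_l1 (v : Fin n → ℝ) :
    ∑ i, |∑ k, Jmat B i k * ∑ j, Jmat C k j * v j| ≤
      (1 - 2*((n:ℝ)-2)*δ^2/((n:ℝ)-1)) * ∑ j, |v j| := by
  have hswap : ∀ i : Fin n, ∑ k, Jmat B i k * ∑ j, Jmat C k j * v j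
      = ∑ j, (∑ k, Jmat B i k * Jmat C k j) * v j := by
    intro i
    simp_rw [Finset.mul_sum]
    rw [Finset.sum_comm]
    apply Finset.sum_congr rfl
    intro j _
    rw [Finset.sum_mul]
    apply Finset.sum_congr rfl
    intro k _
    ring
  calc ∑ i, |∑ k, Jmat B i k * ∑ j, Jmat C k j * v j|
      = ∑ i, |∑ j, (∑ k, Jmat B i k * Jmat C k j) * v j| := by simp_rw [hswap]
    _ ≤ ∑ i, ∑ j, |∑ k, Jmat B i k * Jmat C k j| * |v j| := by
        apply Finset.sum_le_sum
        intro i _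
        calc |∑ j, (∑ k, Jmat B i k * Jmat C k j) * v j|
            ≤ ∑ j, |(∑ k, Jmat B i k * Jmat C k j) * v j| := Finset.abs_sum_le_sum_abs _ _
          _ = ∑ j, |∑ k, Jmat B i k * Jmat C k j| * |v j| := by simp [abs_mul]
    _ = ∑ j, (∑ i, |∑ k, Jmat B i k * Jmat C k j|) * |v j| := by
        rw [Finset.sum_comm]
        simp_rw [Finset.sum_mul]
    _ ≤ ∑ j, (1 - 2*((n:ℝ)-2)*δ^2/((n:ℝ)-1)) * |v j| := by
        apply Finset.sum_le_sum
        intro j _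
        exact mul_le_mul_of_nonneg_right (Jprod_colsum hn δ hδ hδ2 B C hB hC j) (abs_nonneg _)
    _ = (1 - 2*((n:ℝ)-2)*δ^2/((n:ℝ)-1)) * ∑ j, |v j| := by rw [Finset.mul_sum]

end alg3

lemma II_of_meas_bdd {g : ℝ → ℝ} (hm : Measurable g) (M : ℝ)
    (hb : ∀ s ∈ Set.Ioc (0:ℝ) 1, |g s| ≤ M) :
    IntervalIntegrable g MeasureTheory.volume 0 1 := by
  have huIoc : Set.uIoc (0:ℝ) 1 = Set.Ioc 0 1 := Set.uIoc_of_le zero_le_one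
  rw [intervalIntegrable_iff, huIoc]
  have hfact : Fact (MeasureTheory.volume (Set.Ioc (0:ℝ) 1) < ⊤) :=
    ⟨by simp [Real.volume_Ioc]⟩
  apply MeasureTheory.Integrable.mono' (MeasureTheory.integrable_const M)
    hm.aestronglyMeasurable
  exact (MeasureTheory.ae_restrict_mem measurableSet_Ioc).mono
    (fun s hs => by simpa [Real.norm_eq_abs] using hb s hs)

noncomputable def Amat {n K : ℕ} (F f : ℝ → ℝ) (β : Fin K → ℝ)
    (x : Fin n → Fin n → Fin K → ℝ) (w : Fin n → ℝ) (i j : Fin n) : ℝ :=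
  f (w i + ∑ k, x i j k * β k) * F (w j + ∑ k, x j i k * β k)

lemma step_repr {n K : ℕ}
    (F f : ℝ → ℝ) (hFf : ∀ t : ℝ, HasDerivAt F (f t) t)
    (β : Fin K → ℝ) (x : Fin n → Fin n → Fin K → ℝ) (d : Fin n → ℝ)
    (r : (Fin n → ℝ) → Fin n → ℝ)
    (hr : ∀ α : Fin n → ℝ, ∀ i : Fin n,
      r α i = α i + (1 / ((n : ℝ) - 1)) *
        (d i - ∑ j ∈ univ.erase i,
          F (α i + ∑ k, x i j k * β k) * F (α j + ∑ k, x j i k * β k)))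
    (u u' : Fin n → ℝ) (k : Fin n) (s : ℝ) :
    HasDerivAt (fun s : ℝ => r (fun m => u' m + s * (u m - u' m)) k)
      (∑ j, Jmat (Amat F f β x (fun m => u' m + s * (u m - u' m))) k j * (u j - u' j)) s := by
  have hφ : (fun s : ℝ => r (fun m => u' m + s * (u m - u' m)) k)
      = fun s : ℝ => (u' k + s * (u k - u' k)) + (1/((n:ℝ)-1)) *
          (d k - ∑ j ∈ univ.erase k,
            F ((u' k + s * (u k - u' k)) + ∑ l, x k j l * β l) *
            F ((u' j + s * (u j - u' j)) + ∑ l, x j k l * β l)) := by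
    funext s
    rw [hr]
  rw [hφ]
  have hlin : ∀ m : Fin n, HasDerivAt (fun s : ℝ => u' m + s * (u m - u' m)) (u m - u' m) s := by
    intro m
    simpa using (hasDerivAt_mul_const (u m - u' m)).const_add (u' m)
  have hFcomp : ∀ m j : Fin n, HasDerivAt
      (fun s : ℝ => F ((u' m + s * (u m - u' m)) + ∑ l, x m j l * β l))
      (f ((u' m + s * (u m - u' m)) + ∑ l, x m j l * β l) * (u m - u' m)) s := by
    intro m j
    exact (hFf _).comp s ((hlin m).add_const _)
  have hterm : ∀ j ∈ univ.erase k, HasDerivAt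
      (fun s : ℝ => F ((u' k + s * (u k - u' k)) + ∑ l, x k j l * β l) *
        F ((u' j + s * (u j - u' j)) + ∑ l, x j k l * β l))
      (f ((u' k + s * (u k - u' k)) + ∑ l, x k j l * β l) * (u k - u' k) *
          F ((u' j + s * (u j - u' j)) + ∑ l, x j k l * β l)
        + F ((u' k + s * (u k - u' k)) + ∑ l, x k j l * β l) *
          (f ((u' j + s * (u j - u' j)) + ∑ l, x j k l * β l) * (u j - u' j))) s := by
    intro j _
    exact (hFcomp k j).mul (hFcomp j k)
  have hsum := HasDerivAt.sum hterm
  have hd := (hlin k).add (((hsum.const_sub (d k)).const_mul (1/((n:ℝ)-1))))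
  have heq : (u k - u' k) + (1/((n:ℝ)-1)) *
      (-∑ j ∈ univ.erase k,
        (f ((u' k + s * (u k - u' k)) + ∑ l, x k j l * β l) * (u k - u' k) *
            F ((u' j + s * (u j - u' j)) + ∑ l, x j k l * β l)
          + F ((u' k + s * (u k - u' k)) + ∑ l, x k j l * β l) *
            (f ((u' j + s * (u j - u' j)) + ∑ l, x j k l * β l) * (u j - u' j))))
      = ∑ j, Jmat (Amat F f β x (fun m => u' m + s * (u m - u' m))) k j * (u j - u' j) := by
    rw [← Finset.sum_erase_add _ _ (mem_univ k), Jmat_diag']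
    have hoff : ∑ j ∈ univ.erase k,
        Jmat (Amat F f β x (fun m => u' m + s * (u m - u' m))) k j * (u j - u' j)
        = -((1/((n:ℝ)-1)) * ∑ j ∈ univ.erase k,
            f ((u' j + s * (u j - u' j)) + ∑ l, x j k l * β l) *
            F ((u' k + s * (u k - u' k)) + ∑ l, x k j l * β l) * (u j - u' j)) := by
      rw [Finset.mul_sum, ← Finset.sum_neg_distrib]
      apply Finset.sum_congr rfl
      intro j hj
      rw [Jmat_off' _ _ _ (Finset.ne_of_mem_erase hj), Amat]
      ring
    rw [hoff]
    rw [Finset.sum_add_distrib]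
    have hs1 : ∑ j ∈ univ.erase k,
        f ((u' k + s * (u k - u' k)) + ∑ l, x k j l * β l) * (u k - u' k) *
          F ((u' j + s * (u j - u' j)) + ∑ l, x j k l * β l)
        = (∑ j ∈ univ.erase k, Amat F f β x (fun m => u' m + s * (u m - u' m)) k j)
            * (u k - u' k) := by
      rw [Finset.sum_mul]
      apply Finset.sum_congr rfl
      intro j _
      rw [Amat]
      ring
    have hs2 : ∑ j ∈ univ.erase k,
        F ((u' k + s * (u k - u' k)) + ∑ l, x k j l * β l) *
          (f ((u' j + s * (u j - u' j)) + ∑ l, x j k l * β l) * (u j - u' j))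
        = ∑ j ∈ univ.erase k,
            f ((u' j + s * (u j - u' j)) + ∑ l, x j k l * β l) *
            F ((u' k + s * (u k - u' k)) + ∑ l, x k j l * β l) * (u j - u' j) := by
      apply Finset.sum_congr rfl
      intro j _
      ring
    rw [hs1, hs2]
    ring
  rw [heq] at hd
  refine hd.congr_of_eventuallyEq (Filter.Eventually.of_forall fun y => ?_)
  simp only [Pi.add_apply, Finset.sum_apply]

open MeasureTheory in
lemma key_colsum_bound {n : ℕ} (hn : 2 ≤ n) (δ : ℝ) (hδ : 0 < δ) (hδ2 : δ ≤ 1/2)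
    (B : Fin n → Fin n → ℝ) (hB : ∀ i j : Fin n, i ≠ j → B i j ∈ Set.Icc δ (1-δ))
    (Cs : ℝ → Fin n → Fin n → ℝ)
    (hC : ∀ s ∈ Set.Icc (0:ℝ) 1, ∀ i j : Fin n, i ≠ j → Cs s i j ∈ Set.Icc δ (1-δ))
    (v : Fin n → ℝ) (w : Fin n → ℝ)
    (hw : ∀ k, w k = ∫ s in (0:ℝ)..1, ∑ j, Jmat (Cs s) k j * v j)
    (hmeas : ∀ k, Measurable (fun s => ∑ j, Jmat (Cs s) k j * v j))
    (hbd : ∀ k, ∀ s ∈ Set.Icc (0:ℝ) 1, |∑ j, Jmat (Cs s) k j * v j| ≤ ∑ j, |v j|) :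
    ∑ i, |∑ k, Jmat B i k * w k| ≤ (1 - 2*((n:ℝ)-2)*δ^2/((n:ℝ)-1)) * ∑ j, |v j| := by
  have hint : ∀ k, IntervalIntegrable (fun s => ∑ j, Jmat (Cs s) k j * v j) volume 0 1 :=
    fun k => II_of_meas_bdd (hmeas k) _ (fun s hs => hbd k s ⟨hs.1.le, hs.2⟩)
  have hGi : ∀ i, ∑ k, Jmat B i k * w k
      = ∫ s in (0:ℝ)..1, ∑ k, Jmat B i k * ∑ j, Jmat (Cs s) k j * v j := by
    intro i
    calc ∑ k, Jmat B i k * w k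
        = ∑ k, ∫ s in (0:ℝ)..1, Jmat B i k * ∑ j, Jmat (Cs s) k j * v j := by
          apply Finset.sum_congr rfl
          intro k _
          rw [hw k, intervalIntegral.integral_const_mul]
      _ = ∫ s in (0:ℝ)..1, ∑ k, Jmat B i k * ∑ j, Jmat (Cs s) k j * v j :=
          (intervalIntegral.integral_finset_sum (fun k _ => (hint k).const_mul _)).symm
  have hinner_meas : ∀ i, Measurable (fun s => ∑ k, Jmat B i k * ∑ j, Jmat (Cs s) k j * v j) :=
    fun i => Finset.measurable_sum _ (fun k _ => (hmeas k).const_mul _)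
  have hinner_bd : ∀ i, ∀ s ∈ Set.Icc (0:ℝ) 1,
      |∑ k, Jmat B i k * ∑ j, Jmat (Cs s) k j * v j| ≤ (n:ℝ) * ∑ j, |v j| := by
    intro i s hs
    calc |∑ k, Jmat B i k * ∑ j, Jmat (Cs s) k j * v j|
        ≤ ∑ k, |∑ j, Jmat (Cs s) k j * v j| := Jbound_vec hn δ hδ hδ2 B hB _ i
      _ ≤ ∑ _k : Fin n, ∑ j, |v j| := Finset.sum_le_sum fun k _ => hbd k s hs
      _ = (n:ℝ) * ∑ j, |v j| := by
          rw [Finset.sum_const, Finset.card_univ, Fintype.card_fin, nsmul_eq_mul]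
  have habs_int : ∀ i, IntervalIntegrable
      (fun s => |∑ k, Jmat B i k * ∑ j, Jmat (Cs s) k j * v j|) volume 0 1 :=
    fun i => II_of_meas_bdd (hinner_meas i).abs _
      (fun s hs => by rw [abs_abs]; exact hinner_bd i s ⟨hs.1.le, hs.2⟩)
  have hsum_int : IntervalIntegrable
      (fun s => ∑ i, |∑ k, Jmat B i k * ∑ j, Jmat (Cs s) k j * v j|) volume 0 1 := by
    apply II_of_meas_bdd (Finset.measurable_sum _ (fun i _ => (hinner_meas i).abs))
      ((n:ℝ) * ((n:ℝ) * ∑ j, |v j|))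
    intro s hs
    rw [abs_of_nonneg (Finset.sum_nonneg fun i _ => abs_nonneg _)]
    calc ∑ i, |∑ k, Jmat B i k * ∑ j, Jmat (Cs s) k j * v j|
        ≤ ∑ _i : Fin n, (n:ℝ) * ∑ j, |v j| :=
          Finset.sum_le_sum fun i _ => hinner_bd i s ⟨hs.1.le, hs.2⟩
      _ = (n:ℝ) * ((n:ℝ) * ∑ j, |v j|) := by
          rw [Finset.sum_const, Finset.card_univ, Fintype.card_fin, nsmul_eq_mul]
  calc ∑ i, |∑ k, Jmat B i k * w k|
      = ∑ i, |∫ s in (0:ℝ)..1, ∑ k, Jmat B i k * ∑ j, Jmat (Cs s) k j * v j| := by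
        apply Finset.sum_congr rfl
        intro i _
        rw [hGi i]
    _ ≤ ∑ i, ∫ s in (0:ℝ)..1, |∑ k, Jmat B i k * ∑ j, Jmat (Cs s) k j * v j| :=
        Finset.sum_le_sum fun i _ =>
          intervalIntegral.abs_integral_le_integral_abs zero_le_one
    _ = ∫ s in (0:ℝ)..1, ∑ i, |∑ k, Jmat B i k * ∑ j, Jmat (Cs s) k j * v j| :=
        (intervalIntegral.integral_finset_sum (fun i _ => habs_int i)).symm
    _ ≤ ∫ _s in (0:ℝ)..1, ((1 - 2*((n:ℝ)-2)*δ^2/((n:ℝ)-1)) * ∑ j, |v j|) := by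
        apply intervalIntegral.integral_mono_on zero_le_one hsum_int intervalIntegrable_const
        intro s hs
        exact Jprod_l1 hn δ hδ hδ2 B (Cs s) hB (hC s hs) v
    _ = (1 - 2*((n:ℝ)-2)*δ^2/((n:ℝ)-1)) * ∑ j, |v j| := by simp

/-- Two-step ℓ₁-contraction of the degree-matching iteration map
(core of Theorem 3.1 of the dyadic NTU network formation paper). -/
theorem two_step_l1_contraction
    (n K : ℕ) (hn : 2 ≤ n) (hK : 1 ≤ K)
    (c₁ c₂ : ℝ) (hc₁ : c₁ ∈ Set.Ioc (0 : ℝ) (1 / 2)) (hc₂ : c₂ ∈ Set.Ioc (0 : ℝ) (1 / 2))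
    (F f : ℝ → ℝ) (hFf : ∀ t : ℝ, HasDerivAt F (f t) t)
    (β : Fin K → ℝ) (x : Fin n → Fin n → Fin K → ℝ) (d : Fin n → ℝ)
    (D : Set (Fin n → ℝ)) (hDne : D.Nonempty) (hDconv : Convex ℝ D)
    (hFbound : ∀ α ∈ D, ∀ i j : Fin n, i ≠ j →
      F (α i + ∑ k, x i j k * β k) ∈ Set.Icc c₁ (1 - c₁))
    (hfbound : ∀ α ∈ D, ∀ i j : Fin n, i ≠ j →
      f (α i + ∑ k, x i j k * β k) ∈ Set.Icc c₂ (1 - c₂))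
    (r : (Fin n → ℝ) → Fin n → ℝ)
    (hr : ∀ α : Fin n → ℝ, ∀ i : Fin n,
      r α i = α i + (1 / ((n : ℝ) - 1)) *
        (d i - ∑ j ∈ univ.erase i,
          F (α i + ∑ k, x i j k * β k) * F (α j + ∑ k, x j i k * β k)))
    (α α' : Fin n → ℝ) (hα : α ∈ D) (hα' : α' ∈ D)
    (hrα : r α ∈ D) (hrα' : r α' ∈ D) :
    ∑ i, |r (r α) i - r (r α') i| ≤
      (1 - (2 * ((n : ℝ) - 2) / ((n : ℝ) - 1)) * (c₁ * c₂) ^ 2) *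
        ∑ i, |α i - α' i| := by
  have h1 : (0:ℝ) < (n:ℝ) - 1 := hn1 hn
  have hδ : (0:ℝ) < c₁ * c₂ := mul_pos hc₁.1 hc₂.1
  have hδ2 : c₁ * c₂ ≤ 1/2 := by nlinarith [hc₁.2, hc₂.2, hc₁.1, hc₂.1]
  have hA : ∀ w ∈ D, ∀ i j : Fin n, i ≠ j →
      Amat F f β x w i j ∈ Set.Icc (c₁*c₂) (1 - c₁*c₂) := by
    intro w hw i j hij
    have hf' := hfbound w hw i j hij
    have hF' := hFbound w hw j i (Ne.symm hij)
    rw [Amat]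
    constructor
    · have hlow := mul_le_mul hf'.1 hF'.1 hc₁.1.le (le_trans hc₂.1.le hf'.1)
      calc c₁ * c₂ = c₂ * c₁ := by ring
        _ ≤ _ := hlow
    · have hup := mul_le_mul hf'.2 hF'.2 (le_trans hc₁.1.le hF'.1)
        (by linarith [hc₂.2] : (0:ℝ) ≤ 1 - c₂)
      have : (1 - c₂) * (1 - c₁) ≤ 1 - c₁ * c₂ := by nlinarith [hc₁.1, hc₂.1, hc₁.2, hc₂.2]
      linarith
  have hseg : ∀ u, u ∈ D → ∀ u', u' ∈ D → ∀ s ∈ Set.Icc (0:ℝ) 1,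
      (fun m => u' m + s * (u m - u' m)) ∈ D := by
    intro u hu u' hu' s hs
    have hmem := hDconv hu' hu (by linarith [hs.2] : (0:ℝ) ≤ 1 - s) hs.1 (by ring)
    have heq : (fun m => u' m + s * (u m - u' m)) = (1 - s) • u' + s • u := by
      funext m
      simp only [Pi.add_apply, Pi.smul_apply, smul_eq_mul]
      ring
    rw [heq]
    exact hmem
  have hstepAll : ∀ u, u ∈ D → ∀ u', u' ∈ D → ∀ k : Fin n,
      (r u k - r u' k = ∫ s in (0:ℝ)..1,
          ∑ j, Jmat (Amat F f β x (fun m => u' m + s * (u m - u' m))) k j * (u j - u' j))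
      ∧ Measurable (fun s : ℝ =>
          ∑ j, Jmat (Amat F f β x (fun m => u' m + s * (u m - u' m))) k j * (u j - u' j))
      ∧ (∀ s ∈ Set.Icc (0:ℝ) 1,
          |∑ j, Jmat (Amat F f β x (fun m => u' m + s * (u m - u' m))) k j * (u j - u' j)|
            ≤ ∑ j, |u j - u' j|) := by
    intro u hu u' hu' k
    have hd : ∀ s : ℝ, HasDerivAt (fun s : ℝ => r (fun m => u' m + s * (u m - u' m)) k)
        (∑ j, Jmat (Amat F f β x (fun m => u' m + s * (u m - u' m))) k j * (u j - u' j)) s :=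
      fun s => step_repr F f hFf β x d r hr u u' k s
    have hmeas : Measurable (fun s : ℝ =>
        ∑ j, Jmat (Amat F f β x (fun m => u' m + s * (u m - u' m))) k j * (u j - u' j)) := by
      have heq : (fun s : ℝ =>
          ∑ j, Jmat (Amat F f β x (fun m => u' m + s * (u m - u' m))) k j * (u j - u' j))
          = deriv (fun s : ℝ => r (fun m => u' m + s * (u m - u' m)) k) :=
        funext fun s => ((hd s).deriv).symm
      rw [heq]
      exact measurable_deriv _
    have hbd : ∀ s ∈ Set.Icc (0:ℝ) 1,
        |∑ j, Jmat (Amat F f β x (fun m => u' m + s * (u m - u' m))) k j * (u j - u' j)|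
          ≤ ∑ j, |u j - u' j| := by
      intro s hs
      exact Jbound_vec hn (c₁*c₂) hδ hδ2 _
        (fun i j hij => hA _ (hseg u hu u' hu' s hs) i j hij) _ k
    refine ⟨?_, hmeas, hbd⟩
    have hint := II_of_meas_bdd hmeas _ (fun s hs => hbd s ⟨hs.1.le, hs.2⟩)
    have hftc := intervalIntegral.integral_eq_sub_of_hasDerivAt (fun s _ => hd s) hint
    rw [hftc]
    show r u k - r u' k = r (fun m => u' m + (1:ℝ) * (u m - u' m)) k
      - r (fun m => u' m + (0:ℝ) * (u m - u' m)) k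
    have h1' : (fun m => u' m + (1:ℝ) * (u m - u' m)) = u := funext fun m => by ring
    have h0' : (fun m => u' m + (0:ℝ) * (u m - u' m)) = u' := funext fun m => by ring
    rw [h1', h0']
  have hv := fun k => hstepAll α hα α' hα' k
  have hwout := fun i => hstepAll (r α) hrα (r α') hrα' i
  have hkey : ∀ t ∈ Set.Icc (0:ℝ) 1,
      ∑ i, |∑ k, Jmat (Amat F f β x (fun m => r α' m + t * (r α m - r α' m))) i k
          * (r α k - r α' k)|
        ≤ (1 - 2*((n:ℝ)-2)*(c₁*c₂)^2/((n:ℝ)-1)) * ∑ j, |α j - α' j| := by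
    intro t ht
    exact key_colsum_bound hn (c₁*c₂) hδ hδ2 _
      (fun i j hij => hA _ (hseg (r α) hrα (r α') hrα' t ht) i j hij)
      (fun s => Amat F f β x (fun m => α' m + s * (α m - α' m)))
      (fun s hs i j hij => hA _ (hseg α hα α' hα' s hs) i j hij)
      (fun j => α j - α' j) (fun k => r α k - r α' k)
      (fun k => (hv k).1) (fun k => (hv k).2.1) (fun k s hs => (hv k).2.2 s hs)
  have hOint : ∀ i, IntervalIntegrable
      (fun t => |∑ k, Jmat (Amat F f β x (fun m => r α' m + t * (r α m - r α' m))) i k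
        * (r α k - r α' k)|) MeasureTheory.volume 0 1 :=
    fun i => II_of_meas_bdd ((hwout i).2.1).abs _
      (fun t ht => by rw [abs_abs]; exact (hwout i).2.2 t ⟨ht.1.le, ht.2⟩)
  have hsum_int : IntervalIntegrable
      (fun t => ∑ i, |∑ k, Jmat (Amat F f β x (fun m => r α' m + t * (r α m - r α' m))) i k
        * (r α k - r α' k)|) MeasureTheory.volume 0 1 := by
    apply II_of_meas_bdd (Finset.measurable_sum _ (fun i _ => ((hwout i).2.1).abs))
      ((n:ℝ) * ∑ k, |r α k - r α' k|)
    intro t ht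
    rw [abs_of_nonneg (Finset.sum_nonneg fun i _ => abs_nonneg _)]
    calc ∑ i, |∑ k, Jmat (Amat F f β x (fun m => r α' m + t * (r α m - r α' m))) i k
          * (r α k - r α' k)|
        ≤ ∑ _i : Fin n, ∑ k, |r α k - r α' k| :=
          Finset.sum_le_sum fun i _ => (hwout i).2.2 t ⟨ht.1.le, ht.2⟩
      _ = (n:ℝ) * ∑ k, |r α k - r α' k| := by
          rw [Finset.sum_const, Finset.card_univ, Fintype.card_fin, nsmul_eq_mul]
  calc ∑ i, |r (r α) i - r (r α') i|
      = ∑ i, |∫ t in (0:ℝ)..1,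
          ∑ k, Jmat (Amat F f β x (fun m => r α' m + t * (r α m - r α' m))) i k
            * (r α k - r α' k)| := by
        apply Finset.sum_congr rfl
        intro i _
        rw [(hwout i).1]
    _ ≤ ∑ i, ∫ t in (0:ℝ)..1,
          |∑ k, Jmat (Amat F f β x (fun m => r α' m + t * (r α m - r α' m))) i k
            * (r α k - r α' k)| :=
        Finset.sum_le_sum fun i _ =>
          intervalIntegral.abs_integral_le_integral_abs zero_le_one
    _ = ∫ t in (0:ℝ)..1, ∑ i,
          |∑ k, Jmat (Amat F f β x (fun m => r α' m + t * (r α m - r α' m))) i k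
            * (r α k - r α' k)| :=
        (intervalIntegral.integral_finset_sum (fun i _ => hOint i)).symm
    _ ≤ ∫ _t in (0:ℝ)..1, ((1 - 2*((n:ℝ)-2)*(c₁*c₂)^2/((n:ℝ)-1)) * ∑ j, |α j - α' j|) :=
        intervalIntegral.integral_mono_on zero_le_one hsum_int intervalIntegrable_const hkey
    _ = (1 - 2*((n:ℝ)-2)*(c₁*c₂)^2/((n:ℝ)-1)) * ∑ j, |α j - α' j| := by simp
    _ = (1 - (2 * ((n : ℝ) - 2) / ((n : ℝ) - 1)) * (c₁ * c₂) ^ 2) * ∑ i, |α i - α' i| := by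
        ring
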